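/- For all vectors q, λ ∈ ℝ^N and every index j, one has Σᵢ λᵢ·𝓜_N(q,λ)_{ij} = 0 and Σᵢ qᵢ·𝓜_N(q,λ)_{ij} = 0 (i.e. both λ and q lie in the kernel of the transpose of 𝓜_N(q,λ)). Consequently, if λ and q are linearly independent, then the rank of 𝓜_N(q,λ) is at most N − 2. -/

import Mathlib

/-- Dot product on `ℝ^N`. -/
noncomputable def dotProd {N : ℕ} (x y : Fin N → ℝ) : ℝ := ∑ i, x i * y i

/-- The matrix `𝓜_N(q,λ) = [(λ·q)² − ‖q‖²‖λ‖²]·I_N + 𝓝_N(q,λ)`, where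
`𝓝_N(q,λ)_{ij} = qᵢ(‖λ‖²q_j − (λ·q)λ_j) + λᵢ(‖q‖²λ_j − (λ·q)q_j)`. -/
noncomputable def calM {N : ℕ} (q lam : Fin N → ℝ) : Matrix (Fin N) (Fin N) ℝ :=
  Matrix.of fun i j =>
    ((dotProd lam q) ^ 2 - dotProd q q * dotProd lam lam) * (if i = j then 1 else 0)
      + (q i * (dotProd lam lam * q j - dotProd lam q * lam j)
        + lam i * (dotProd q q * lam j - dotProd lam q * q j))

lemma calM_sum (N : ℕ) (q lam x : Fin N → ℝ) (j : Fin N) :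
    ∑ i, x i * calM q lam i j =
      ((dotProd lam q) ^ 2 - dotProd q q * dotProd lam lam) * x j
        + (dotProd x q) * (dotProd lam lam * q j - dotProd lam q * lam j)
        + (dotProd x lam) * (dotProd q q * lam j - dotProd lam q * q j) := by
  have key : ∀ i, x i * calM q lam i j =
      ((dotProd lam q) ^ 2 - dotProd q q * dotProd lam lam) * (x i * (if i = j then 1 else 0))
      + ((x i * q i) * (dotProd lam lam * q j - dotProd lam q * lam j)
        + (x i * lam i) * (dotProd q q * lam j - dotProd lam q * q j)) := by
    intro i; simp only [calM, Matrix.of_apply]; ring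
  rw [Finset.sum_congr rfl fun i _ => key i, Finset.sum_add_distrib, Finset.sum_add_distrib,
    ← Finset.mul_sum, ← Finset.sum_mul, ← Finset.sum_mul]
  have hite : ∑ i, x i * (if i = j then (1:ℝ) else 0) = x j := by
    simp [mul_ite]
  rw [hite]
  simp only [dotProd]
  ring

lemma dotProd_comm {N : ℕ} (x y : Fin N → ℝ) : dotProd x y = dotProd y x := by
  unfold dotProd; exact Finset.sum_congr rfl fun i _ => mul_comm _ _

/-- Both `λ` and `q` lie in the kernel of the transpose of `𝓜_N(q,λ)`:
`Σᵢ λᵢ 𝓜_{ij} = 0` and `Σᵢ qᵢ 𝓜_{ij} = 0` for every `j`. Consequently, if `λ`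
and `q` are linearly independent, the rank of `𝓜_N(q,λ)` is at most `N − 2`. -/
theorem calM_transpose_kernel_and_rank (N : ℕ) (q lam : Fin N → ℝ) :
    (∀ j, ∑ i, lam i * calM q lam i j = 0) ∧
    (∀ j, ∑ i, q i * calM q lam i j = 0) ∧
    (LinearIndependent ℝ ![lam, q] → (calM q lam).rank ≤ N - 2) := by
  have h1 : ∀ j, ∑ i, lam i * calM q lam i j = 0 := by
    intro j; rw [calM_sum]; ring
  have h2 : ∀ j, ∑ i, q i * calM q lam i j = 0 := by
    intro j; rw [calM_sum, dotProd_comm q lam]; ring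
  refine ⟨h1, h2, fun hli => ?_⟩
  rw [← Matrix.rank_transpose]
  set T := (calM q lam).transpose
  have hker : ∀ x ∈ ({lam, q} : Set (Fin N → ℝ)), x ∈ LinearMap.ker T.mulVecLin := by
    rintro x hx
    rcases hx with rfl | rfl
    · ext j
      simpa [Matrix.mulVecLin, Matrix.mulVec, Matrix.vecMul, dotProduct, T, Matrix.transpose_apply,
        mul_comm] using h1 j
    · ext j
      simpa [Matrix.mulVecLin, Matrix.mulVec, Matrix.vecMul, dotProduct, T, Matrix.transpose_apply,
        mul_comm] using h2 j
  have hspan : Submodule.span ℝ (Set.range ![lam, q]) ≤ LinearMap.ker T.mulVecLin := by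
    rw [Submodule.span_le]
    rintro x ⟨i, rfl⟩
    fin_cases i
    · exact hker lam (by simp)
    · exact hker q (by simp)
  have h2le : 2 ≤ Module.finrank ℝ (LinearMap.ker T.mulVecLin) := by
    have := Submodule.finrank_mono hspan
    rwa [finrank_span_eq_card hli, Fintype.card_fin] at this
  have hrn : T.rank + Module.finrank ℝ (LinearMap.ker T.mulVecLin) = N := by
    have := LinearMap.finrank_range_add_finrank_ker T.mulVecLin
    simpa [Matrix.rank] using this
  omega
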